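/- For a, b, t, l ∈ ℤ, ξ ∈ ℚ^×, the rational matrix identity a(ξ)·w·n(-a/b)·a(δ⁻¹)·σ = z([δ,b]⁻¹)·a(ξ[δ,b]·b/(δ,b))·n(ā/(b/(δ,b)))·δ'·σ holds, where δ' is the SL₂(ℤ) matrix [[ā, (1-uā)/c],[-c, u]] with u = aδ/(δ,b), c = b/(δ,b), ā·u ≡ 1 mod c — specialized to σ = Id: a(ξ)·w·n(-a/b) = z(1/[δ,b])·a(ξ[δ,b]b/(δ,b))·n(ā·(δ,b)/b)·δ'. -/

import Mathlib

open Matrix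

/-- Rational matrix identity underlying the Vorono\"i formula (specialized to `σ = Id`):
`a(ξ)·w·n(-a/b)·a(δ⁻¹) = z(1/[δ,b])·a(ξ[δ,b]b/(δ,b))·n(ā(δ,b)/b)·δ'`, where
`δ' = [[ā, (1-uā)/c],[-c, u]]` with `u = aδ/(δ,b)`, `c = b/(δ,b)` and `u·ā ≡ 1 mod c`. -/
theorem voronoi_matrix_identity (a b δ abar : ℤ) (hab : IsCoprime a b)
    (hb : 0 < b) (hδ : 0 < δ) (ξ : ℚ) (hξ : ξ ≠ 0)
    (hinv : (b / (Int.gcd δ b : ℤ)) ∣ 1 - (a * δ / (Int.gcd δ b : ℤ)) * abar) :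
    !![ξ, 0; 0, 1] * !![0, 1; -1, 0] * !![1, -(a : ℚ) / (b : ℚ); 0, 1] *
        !![((δ : ℚ))⁻¹, 0; 0, 1]
      = Matrix.scalar (Fin 2) ((Int.lcm δ b : ℚ))⁻¹ *
        !![ξ * (Int.lcm δ b : ℚ) * (b : ℚ) / (Int.gcd δ b : ℚ), 0; 0, 1] *
        !![1, (abar : ℚ) * (Int.gcd δ b : ℚ) / (b : ℚ); 0, 1] *
        !![(abar : ℚ),
           (((1 - (a * δ / (Int.gcd δ b : ℤ)) * abar) / (b / (Int.gcd δ b : ℤ)) : ℤ) : ℚ);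
           -((b / (Int.gcd δ b : ℤ) : ℤ) : ℚ), ((a * δ / (Int.gcd δ b : ℤ) : ℤ) : ℚ)] := by
  have hgb : ((Int.gcd δ b : ℤ)) ∣ b := Int.gcd_dvd_right δ b
  have hgδ : ((Int.gcd δ b : ℤ)) ∣ δ := Int.gcd_dvd_left δ b
  have hgaδ : ((Int.gcd δ b : ℤ)) ∣ a * δ := hgδ.mul_left a
  have hg0 : ((Int.gcd δ b : ℤ)) ≠ 0 := by
    simp only [ne_eq, Nat.cast_eq_zero, Int.gcd_eq_zero_iff]
    rintro ⟨-, h⟩; exact hb.ne' h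
  have hc0 : (b / (Int.gcd δ b : ℤ)) ≠ 0 := by
    intro h
    have := Int.ediv_mul_cancel hgb
    rw [h, zero_mul] at this
    exact hb.ne' this.symm
  have hL : ((Int.gcd δ b : ℤ)) * (Int.lcm δ b : ℤ) = δ * b := by
    have h := Int.gcd_mul_lcm δ b
    have h2 : ((Int.gcd δ b * Int.lcm δ b : ℕ) : ℤ) = (((δ * b).natAbs : ℕ) : ℤ) := by
      exact_mod_cast congrArg (Nat.cast : ℕ → ℤ) (h.trans (Int.natAbs_mul δ b).symm)
    rwa [Int.natAbs_of_nonneg (by positivity), Nat.cast_mul] at h2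
  have hL0 : ((Int.lcm δ b : ℤ)) ≠ 0 := by
    intro h
    rw [h, mul_zero] at hL
    exact (mul_ne_zero hδ.ne' hb.ne') hL.symm
  -- cast divisions to ℚ
  have c1 : (((a * δ / (Int.gcd δ b : ℤ)) : ℤ) : ℚ)
      = ((a : ℚ) * δ) / (Int.gcd δ b : ℚ) := by
    rw [Int.cast_div_charZero hgaδ]; push_cast; ring
  have c2 : (((b / (Int.gcd δ b : ℤ)) : ℤ) : ℚ) = (b : ℚ) / (Int.gcd δ b : ℚ) := by
    rw [Int.cast_div_charZero hgb]; push_cast; ring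
  have c3 : (((1 - (a * δ / (Int.gcd δ b : ℤ)) * abar) / (b / (Int.gcd δ b : ℤ)) : ℤ) : ℚ)
      = (1 - ((a : ℚ) * δ / (Int.gcd δ b : ℚ)) * abar) / ((b : ℚ) / (Int.gcd δ b : ℚ)) := by
    rw [Int.cast_div_charZero hinv, Int.cast_sub, Int.cast_mul, c1, c2]
    push_cast; ring
  have hbQ : (b : ℚ) ≠ 0 := Int.cast_ne_zero.mpr hb.ne'
  have hδQ : (δ : ℚ) ≠ 0 := Int.cast_ne_zero.mpr hδ.ne'
  have hgQ : ((Int.gcd δ b : ℤ) : ℚ) ≠ 0 := Int.cast_ne_zero.mpr hg0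
  have hLQ : ((Int.lcm δ b : ℤ) : ℚ) ≠ 0 := Int.cast_ne_zero.mpr hL0
  have hLQ' : ((Int.gcd δ b : ℚ)) * (Int.lcm δ b : ℚ) = (δ : ℚ) * b := by
    exact_mod_cast congrArg (Int.cast : ℤ → ℚ) hL
  rw [c3, c2, c1]
  have hgQ' : ((Int.gcd δ b : ℕ) : ℚ) ≠ 0 := by exact_mod_cast hgQ
  have hlcm : ((Int.lcm δ b : ℚ)) = (δ : ℚ) * b / (Int.gcd δ b : ℚ) := by
    rw [eq_div_iff hgQ', mul_comm]
    exact_mod_cast hLQ'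
  rw [hlcm]
  ext i j
  fin_cases i <;> fin_cases j <;>
    simp [Matrix.mul_apply, Fin.sum_univ_succ, Matrix.scalar_apply] <;>
    field_simp <;> ring
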